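/- Let X be a separated scheme locally of finite type over a field k with a G_m-action. For any k-algebra A, the restriction map X^+(A) → X(A) sending a G_m-equivariant morphism φ : 𝔸^1_A → X to its restriction φ|_{{1}×Spec A} is injective. -/

import Mathlib

open AlgebraicGeometry CategoryTheory Polynomial

/-- A `G_m`-action on a scheme `X`, described on its functor of points: a natural action
of `Gm(R) = Rˣ` on `X(R) = (Spec R ⟶ X)` for every commutative ring `R`. -/
structure GmActionOn (X : Scheme) where
  smul : ∀ (R : CommRingCat), Rˣ → (Spec R ⟶ X) → (Spec R ⟶ X)
  one_smul : ∀ (R : CommRingCat) (x : Spec R ⟶ X), smul R 1 x = x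
  mul_smul : ∀ (R : CommRingCat) (t s : Rˣ) (x : Spec R ⟶ X),
    smul R (t * s) x = smul R t (smul R s x)
  naturality : ∀ {R S : CommRingCat} (f : R ⟶ S) (t : Rˣ) (x : Spec R ⟶ X),
    smul S (Units.map f.hom.toMonoidHom t) (Spec.map f ≫ x) =
      Spec.map f ≫ smul R t x

/-- A morphism `φ : 𝔸¹_A = Spec A[T] ⟶ X` is `G_m`-equivariant (for the scaling action on
`𝔸¹_A`, trivial on `A`): for any `R`-point `g` of `𝔸¹_A` and any `t ∈ Rˣ`,
`t · φ(g) = φ(t · g)`, where `t · g` rescales the coordinate `T`. -/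
def IsEquivariantFamily {X : Scheme} (act : GmActionOn X) (A : Type) [CommRing A]
    (φ : Spec (CommRingCat.of (Polynomial A)) ⟶ X) : Prop :=
  ∀ (R : CommRingCat) (t : Rˣ) (g : CommRingCat.of (Polynomial A) ⟶ R),
    act.smul R t (Spec.map g ≫ φ) =
      Spec.map (CommRingCat.ofHom
        (Polynomial.eval₂RingHom (g.hom.comp Polynomial.C)
          ((t : ↥R) * g.hom Polynomial.X))) ≫ φ

/-- Restriction of a family `φ : 𝔸¹_A ⟶ X` to the fiber `{1} × Spec A`. -/
noncomputable def restrictAtOne {X : Scheme} (A : Type) [CommRing A]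
    (φ : Spec (CommRingCat.of (Polynomial A)) ⟶ X) : Spec (CommRingCat.of A) ⟶ X :=
  Spec.map (CommRingCat.ofHom (Polynomial.evalRingHom (1 : A))) ≫ φ

/-- For a separated scheme `X` locally of finite type over a field `k` with a
`G_m`-action, the restriction map `X⁺(A) → X(A)`, sending a `G_m`-equivariant morphism
`φ : 𝔸¹_A ⟶ X` to its restriction to `{1} × Spec A`, is injective. -/
theorem attractor_restrictAtOne_injective (k : Type) [Field k] (X : Scheme)
    (sX : X ⟶ Spec (CommRingCat.of k)) (hsep : IsSeparated sX)
    (hlft : LocallyOfFiniteType sX) (act : GmActionOn X)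
    (A : Type) [CommRing A] [Algebra k A]
    (φ ψ : Spec (CommRingCat.of (Polynomial A)) ⟶ X)
    (hφ : IsEquivariantFamily act A φ) (hψ : IsEquivariantFamily act A ψ)
    (h1 : restrictAtOne A φ = restrictAtOne A ψ) :
    φ = ψ := by
  classical
  haveI := hsep
  -- X is separated as an abstract scheme
  haveI hXsep : X.IsSeparated := by
    constructor
    rw [← Limits.terminal.comp_from sX]
    infer_instance
  -- the Laurent polynomial ring point
  let t : (CommRingCat.of (LaurentPolynomial A))ˣ := (LaurentPolynomial.isUnit_T (R := A) 1).unit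
  let g : CommRingCat.of (Polynomial A) ⟶ CommRingCat.of (LaurentPolynomial A) :=
    CommRingCat.ofHom ((LaurentPolynomial.C (R := A)).comp (Polynomial.evalRingHom (1 : A)))
  have hg : ∀ χ : Spec (CommRingCat.of (Polynomial A)) ⟶ X,
      Spec.map g ≫ χ =
        Spec.map (CommRingCat.ofHom (LaurentPolynomial.C (R := A))) ≫ restrictAtOne A χ := by
    intro χ
    rw [restrictAtOne, ← Category.assoc, ← Spec.map_comp]
    rfl
  have h1' := hφ (CommRingCat.of (LaurentPolynomial A)) t g
  have h2' := hψ (CommRingCat.of (LaurentPolynomial A)) t g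
  rw [hg φ, h1, ← hg ψ] at h1'
  have keyH := h1'.symm.trans h2'
  have key : Spec.map (CommRingCat.ofHom (Polynomial.toLaurent (R := A))) ≫ φ =
      Spec.map (CommRingCat.ofHom (Polynomial.toLaurent (R := A))) ≫ ψ := by
    convert keyH using 3
    all_goals
      congr 1
      apply Polynomial.ringHom_ext
      · intro a
        simp [g, CommRingCat.ofHom_apply, Polynomial.coe_eval₂RingHom,
          Polynomial.eval₂_C, Polynomial.toLaurent_C]
      · simp [g, t, CommRingCat.ofHom_apply, Polynomial.coe_eval₂RingHom,
          Polynomial.eval₂_X, Polynomial.eval₂_C, Polynomial.toLaurent_X,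
          IsUnit.unit_spec]
  -- the equalizer argument
  let e := Limits.equalizer.ι φ ψ
  haveI : IsClosedImmersion e := inferInstance
  have hlift : Limits.equalizer.lift _ key ≫ e =
      Spec.map (CommRingCat.ofHom (Polynomial.toLaurent (R := A))) :=
    Limits.equalizer.lift_ι _ key
  have hinj : Function.Injective
      ((Spec.map (CommRingCat.ofHom (Polynomial.toLaurent (R := A)))).appTop) := by
    have heq : ((Spec.map (CommRingCat.ofHom (Polynomial.toLaurent (R := A)))).appTop :
        _ ⟶ _) = (Scheme.ΓSpecIso _).hom ≫
          CommRingCat.ofHom (Polynomial.toLaurent (R := A)) ≫ (Scheme.ΓSpecIso _).inv := by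
      rw [Scheme.ΓSpecIso_inv_naturality, Iso.hom_inv_id_assoc]
    rw [heq]
    intro x y hxy
    simp only [CommRingCat.comp_apply] at hxy
    have h2 := (ConcreteCategory.bijective_of_isIso (C := CommRingCat)
      (Scheme.ΓSpecIso (CommRingCat.of (LaurentPolynomial A))).inv).injective hxy
    simp only [CommRingCat.ofHom_apply] at h2
    have h3 := Polynomial.toLaurent_injective h2
    exact (ConcreteCategory.bijective_of_isIso (C := CommRingCat)
      (Scheme.ΓSpecIso (CommRingCat.of (Polynomial A))).hom).injective h3
  have einj : Function.Injective (e.appTop) := by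
    have h := congrArg Scheme.Hom.appTop hlift
    rw [Scheme.Hom.comp_appTop] at h
    intro x y hxy
    apply hinj
    rw [← h]
    simpa using congrArg (Limits.equalizer.lift _ key).appTop hxy
  haveI := IsClosedImmersion.isIso_of_injective_of_isAffine (f := e) einj
  rw [← cancel_epi e]
  exact Limits.equalizer.condition φ ψ
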